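/- Let S be a poset, (G_i) and (H_i) families of terminating games indexed by S such that the supports are well partially ordered, let i₀ ∈ S be maximal, and suppose G_i = H_i for all i ≠ i₀. If Γ₀(G_{i₀}) = Γ₀(H_{i₀}), then the ordered joins satisfy Γ₀(S ⋈ G) = Γ₀(S ⋈ H). -/

import Mathlib

universe u

/-- Nimbers, as in the older Mathlib: a type synonym of `Ordinal`. -/
def Nimber : Type (u + 1) := Ordinal.{u}

namespace Nimber

noncomputable instance : InfSet Nimber.{u} := inferInstanceAs (InfSet Ordinal.{u})

def toOrdinal : Nimber.{u} ≃ Ordinal.{u} := Equiv.refl _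

end Nimber

namespace SetTheory

/-- Pre-games, as in the older Mathlib `SetTheory.PGame`. -/
inductive PGame : Type (u + 1)
  | mk : ∀ α β : Type u, (α → PGame) → (β → PGame) → PGame

namespace PGame

def LeftMoves : PGame → Type u
  | mk l _ _ _ => l

def RightMoves : PGame → Type u
  | mk _ r _ _ => r

def moveLeft : ∀ g : PGame, LeftMoves g → PGame
  | mk _l _ L _ => L

def moveRight : ∀ g : PGame, RightMoves g → PGame
  | mk _ _r _ R => R

instance : Zero PGame :=
  ⟨⟨PEmpty, PEmpty, PEmpty.elim, PEmpty.elim⟩⟩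

/-- Negation of a pre-game. -/
def neg : PGame → PGame
  | ⟨l, r, L, R⟩ => ⟨r, l, fun i => neg (R i), fun i => neg (L i)⟩

/-- The pair (`x ≤ y`, `x ⧏ y`) of the older Mathlib. -/
noncomputable def leLf (x : PGame.{u}) : PGame.{u} → Prop × Prop :=
  PGame.rec (motive := fun _ => PGame.{u} → Prop × Prop)
    (fun _xl _xr _xL _xR ihL ihR y =>
      PGame.rec (motive := fun _ => Prop × Prop)
        (fun yl yr yL yR jhL jhR =>
          ((∀ i, (ihL i (mk yl yr yL yR)).2) ∧ ∀ j, (jhR j).2,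
            (∃ i, (jhL i).1) ∨ ∃ j, (ihR j (mk yl yr yL yR)).1)) y) x

def le (x y : PGame.{u}) : Prop := (leLf x y).1

/-- Equivalence `x ≈ y` of pre-games. -/
def Equiv (x y : PGame.{u}) : Prop := le x y ∧ le y x

def ImpartialAux : PGame.{u} → Prop
  | ⟨l, r, L, R⟩ => Equiv ⟨l, r, L, R⟩ (neg ⟨l, r, L, R⟩) ∧
      (∀ i, ImpartialAux (L i)) ∧ ∀ j, ImpartialAux (R j)

/-- Impartial pre-games, as in the older Mathlib. -/
class Impartial (G : PGame.{u}) : Prop where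
  out : ImpartialAux G

/-- The Grundy value (mex of the Grundy values of the left options), as in the older Mathlib. -/
noncomputable def grundyValue : PGame.{u} → Nimber.{u}
  | ⟨_, _, L, _⟩ => sInf (Set.range fun i => grundyValue (L i))ᶜ

end PGame

end SetTheory

open SetTheory PGame Nimber

noncomputable section
open Classical in
/-- The state resulting from a (Left) move in component `i₀` of an ordered join:
all components strictly above `i₀` are replaced by the empty game `0`. -/
def ojNextL {S : Type} [PartialOrder S] (x : S → PGame) (i₀ : S) (j : (x i₀).LeftMoves) :
    S → PGame :=
  fun i => if i = i₀ then (x i₀).moveLeft j else if i₀ < i then 0 else x i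

open Classical in
def ojNextR {S : Type} [PartialOrder S] (x : S → PGame) (i₀ : S) (j : (x i₀).RightMoves) :
    S → PGame :=
  fun i => if i = i₀ then (x i₀).moveRight j else if i₀ < i then 0 else x i

/-- The move relation of the ordered join: `OJRel y x` iff `y` results from `x` by a single move. -/
def OJRel {S : Type} [PartialOrder S] (y x : S → PGame) : Prop :=
  (∃ i₀ j, y = ojNextL x i₀ j) ∨ (∃ i₀ j, y = ojNextR x i₀ j)

theorem ojrel_L {S : Type} [PartialOrder S] (x : S → PGame) (i₀ : S) (j : (x i₀).LeftMoves) :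
    OJRel (ojNextL x i₀ j) x := Or.inl ⟨i₀, j, rfl⟩

theorem ojrel_R {S : Type} [PartialOrder S] (x : S → PGame) (i₀ : S) (j : (x i₀).RightMoves) :
    OJRel (ojNextR x i₀ j) x := Or.inr ⟨i₀, j, rfl⟩

/-- The ordered join of a family of games, as a game, given a termination certificate. -/
def ojoinAcc {S : Type} [PartialOrder S] : ∀ x : S → PGame, Acc OJRel x → PGame := fun x h =>
  Acc.rec (motive := fun x _ => PGame)
    (fun x _ ih =>
      PGame.mk (Σ i₀ : S, (x i₀).LeftMoves) (Σ i₀ : S, (x i₀).RightMoves)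
        (fun p => ih _ (ojrel_L x p.1 p.2))
        (fun p => ih _ (ojrel_R x p.1 p.2))) h

open Classical in
/-- The ordered join `S ⋈ G` of a family of games `G` over the poset `S`.
(Defined as `0` in the degenerate non-terminating case.) -/
def ojoin {S : Type} [PartialOrder S] (x : S → PGame) : PGame :=
  if h : Acc OJRel x then ojoinAcc x h else 0

/-- The Grundy set `Γ₁(G)`: the set of Grundy numbers of the options of `G`. -/
def grundySet (G : PGame) : Set Nimber :=
  Set.range fun i => grundyValue (G.moveLeft i)
end

noncomputable instance : LinearOrder Nimber.{u} := inferInstanceAs (LinearOrder Ordinal.{u})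

theorem grundyValue_ne_moveLeft {G : PGame} (i : G.LeftMoves) :
    grundyValue (G.moveLeft i) ≠ grundyValue G := by
  cases G with
  | mk l r L R =>
    intro h
    rw [grundyValue] at h
    have hne : ((Set.range fun i => (grundyValue (L i) : Ordinal))ᶜ).Nonempty :=
      Ordinal.nonempty_compl_range _
    exact csInf_mem (α := Ordinal) hne ⟨i, h⟩

theorem exists_grundyValue_moveLeft_of_lt {G : PGame} {o : Nimber} (h : o < grundyValue G) :
    ∃ i, grundyValue (G.moveLeft i) = o := by
  cases G with
  | mk l r L R =>
    rw [grundyValue] at h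
    have := notMem_of_lt_csInf' (α := Ordinal) (s := (Set.range fun i => (grundyValue (L i) : Ordinal))ᶜ) h
    by_contra hc
    apply this
    rintro ⟨i, hi⟩
    exact hc ⟨i, hi⟩

noncomputable section

theorem moveLeft_cast {A B : PGame} (e : A = B) (j : A.LeftMoves) :
    B.moveLeft (e ▸ j) = A.moveLeft j := by subst e; rfl

variable {S : Type} [PartialOrder S]

theorem ojNextL_self (x : S → PGame) (i : S) (j : (x i).LeftMoves) :
    ojNextL x i j i = (x i).moveLeft j := by simp [ojNextL]

theorem ojNextL_lt (x : S → PGame) (i : S) (j : (x i).LeftMoves) {k : S} (h : i < k) :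
    ojNextL x i j k = 0 := by simp [ojNextL, h.ne', h]

theorem ojNextL_ne (x : S → PGame) (i : S) (j : (x i).LeftMoves) {k : S}
    (h1 : k ≠ i) (h2 : ¬ i < k) : ojNextL x i j k = x k := by simp [ojNextL, h1, h2]

theorem ojoinAcc_eq (x : S → PGame) (h : Acc OJRel x) :
    ojoinAcc x h = PGame.mk (Σ i, (x i).LeftMoves) (Σ i, (x i).RightMoves)
      (fun p => ojoinAcc _ (h.inv (ojrel_L x p.1 p.2)))
      (fun p => ojoinAcc _ (h.inv (ojrel_R x p.1 p.2))) := by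
  cases h; rfl

def ojmk (x : S → PGame) : PGame :=
  PGame.mk (Σ i, (x i).LeftMoves) (Σ i, (x i).RightMoves)
    (fun p => ojoin (ojNextL x p.1 p.2)) (fun p => ojoin (ojNextR x p.1 p.2))

theorem ojoin_eq_ojmk (x : S → PGame) (h : Acc OJRel x) : ojoin x = ojmk x := by
  rw [ojoin, dif_pos h, ojoinAcc_eq, ojmk]
  congr 1
  · funext p; rw [ojoin, dif_pos (h.inv (ojrel_L x p.1 p.2))]
  · funext p; rw [ojoin, dif_pos (h.inv (ojrel_R x p.1 p.2))]

theorem grundy_ojmk_ne (x : S → PGame) (i : S) (j : (x i).LeftMoves) :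
    grundyValue (ojoin (ojNextL x i j)) ≠ grundyValue (ojmk x) :=
  grundyValue_ne_moveLeft (G := ojmk x) ⟨i, j⟩

theorem exists_ojmk (x : S → PGame) {v : Nimber} (h : v < grundyValue (ojmk x)) :
    ∃ (i : S) (j : (x i).LeftMoves), grundyValue (ojoin (ojNextL x i j)) = v := by
  obtain ⟨⟨i, j⟩, h⟩ := exists_grundyValue_moveLeft_of_lt h
  exact ⟨i, j, h⟩

theorem ojoin_key (i₀ : S) (hmax : ∀ i : S, ¬ i₀ < i) :
    ∀ G : S → PGame, Acc (Relation.TransGen OJRel) G →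
    ∀ H : S → PGame, Acc (Relation.TransGen OJRel) H →
    (∀ i, i ≠ i₀ → G i = H i) →
    grundyValue (G i₀) = grundyValue (H i₀) →
    grundyValue (ojoin G) = grundyValue (ojoin H) := by
  intro G hGt
  induction hGt with
  | intro G haccG ihG =>
    intro H hHt
    induction hHt with
    | intro H haccH ihH =>
      intro heq h0
      have accG : Acc OJRel G := acc_transGen_iff.mp (Acc.intro G haccG)
      have accH : Acc OJRel H := acc_transGen_iff.mp (Acc.intro H haccH)
      rw [ojoin_eq_ojmk G accG, ojoin_eq_ojmk H accH]
      apply le_antisymm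
      · by_contra hle
        rw [not_le] at hle
        obtain ⟨i, j, hv⟩ := exists_ojmk G hle
        by_cases hi : i = i₀
        · subst hi
          rcases lt_trichotomy (grundyValue ((G i).moveLeft j)) (grundyValue (G i)) with hγ | hγ | hγ
          · have hγ' : grundyValue ((G i).moveLeft j) < grundyValue (H i) := by
              rw [← h0]; exact hγ
            obtain ⟨j', hj'⟩ := exists_grundyValue_moveLeft_of_lt hγ'
            have hIH := ihG (ojNextL G i j) (Relation.TransGen.single (ojrel_L G i j))
                (ojNextL H i j') ((accH.inv (ojrel_L H i j')).transGen)
                (fun k hk => by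
                  rw [ojNextL_ne G i j hk (hmax k), ojNextL_ne H i j' hk (hmax k)]
                  exact heq k hk)
                (by rw [ojNextL_self, ojNextL_self, hj'])
            exact grundy_ojmk_ne H i j' (by rw [← hIH, hv])
          · exact absurd hγ (grundyValue_ne_moveLeft j)
          · obtain ⟨k, hk⟩ := exists_grundyValue_moveLeft_of_lt hγ
            set G' := ojNextL G i j with hG'def
            have eG' : G' i = (G i).moveLeft j := ojNextL_self G i j
            let k' : (G' i).LeftMoves := eG'.symm ▸ k
            have hk' : grundyValue ((G' i).moveLeft k') = grundyValue (G i) := by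
              rw [moveLeft_cast eG'.symm k]; exact hk
            have hIH := ihG (ojNextL G' i k')
                (Relation.TransGen.head (ojrel_L G' i k')
                  (Relation.TransGen.single (ojrel_L G i j)))
                H (Acc.intro H haccH)
                (fun m hm => by
                  rw [ojNextL_ne G' i k' hm (hmax m), hG'def, ojNextL_ne G i j hm (hmax m)]
                  exact heq m hm)
                (by rw [ojNextL_self, hk']; exact h0)
            have accG' : Acc OJRel G' := accG.inv (ojrel_L G i j)
            apply grundy_ojmk_ne G' i k'
            rw [hIH, ojoin_eq_ojmk H accH, ← hv, ojoin_eq_ojmk G' accG']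
        · have e : G i = H i := heq i hi
          let j' : (H i).LeftMoves := e ▸ j
          have hIH := ihG (ojNextL G i j) (Relation.TransGen.single (ojrel_L G i j))
              (ojNextL H i j') ((accH.inv (ojrel_L H i j')).transGen)
              (fun k hk => by
                by_cases hki : k = i
                · subst hki
                  rw [ojNextL_self, ojNextL_self]
                  exact (moveLeft_cast e j).symm
                · by_cases hik : i < k
                  · rw [ojNextL_lt G i j hik, ojNextL_lt H i j' hik]
                  · rw [ojNextL_ne G i j hki hik, ojNextL_ne H i j' hki hik]
                    exact heq k hk)
              (by
                have h10 : i₀ ≠ i := fun h => hi h.symm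
                by_cases hik : i < i₀
                · rw [ojNextL_lt G i j hik, ojNextL_lt H i j' hik]
                · rw [ojNextL_ne G i j h10 hik, ojNextL_ne H i j' h10 hik]
                  exact h0)
          exact grundy_ojmk_ne H i j' (by rw [← hIH, hv])
      · by_contra hle
        rw [not_le] at hle
        obtain ⟨i, j, hv⟩ := exists_ojmk H hle
        by_cases hi : i = i₀
        · subst hi
          rcases lt_trichotomy (grundyValue ((H i).moveLeft j)) (grundyValue (H i)) with hγ | hγ | hγ
          · have hγ' : grundyValue ((H i).moveLeft j) < grundyValue (G i) := by
              rw [h0]; exact hγ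
            obtain ⟨j', hj'⟩ := exists_grundyValue_moveLeft_of_lt hγ'
            have hIH := ihG (ojNextL G i j') (Relation.TransGen.single (ojrel_L G i j'))
                (ojNextL H i j) ((accH.inv (ojrel_L H i j)).transGen)
                (fun k hk => by
                  rw [ojNextL_ne G i j' hk (hmax k), ojNextL_ne H i j hk (hmax k)]
                  exact heq k hk)
                (by rw [ojNextL_self, ojNextL_self, hj'])
            exact grundy_ojmk_ne G i j' (by rw [hIH, hv])
          · exact absurd hγ (grundyValue_ne_moveLeft j)
          · obtain ⟨k, hk⟩ := exists_grundyValue_moveLeft_of_lt hγ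
            set H' := ojNextL H i j with hH'def
            have eH' : H' i = (H i).moveLeft j := ojNextL_self H i j
            let k' : (H' i).LeftMoves := eH'.symm ▸ k
            have hk' : grundyValue ((H' i).moveLeft k') = grundyValue (H i) := by
              rw [moveLeft_cast eH'.symm k]; exact hk
            have hIH := ihH (ojNextL H' i k')
                (Relation.TransGen.head (ojrel_L H' i k')
                  (Relation.TransGen.single (ojrel_L H i j)))
                (fun m hm => by
                  rw [ojNextL_ne H' i k' hm (hmax m), hH'def, ojNextL_ne H i j hm (hmax m)]
                  exact heq m hm)
                (by rw [ojNextL_self, hk']; exact h0)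
            have accH' : Acc OJRel H' := accH.inv (ojrel_L H i j)
            apply grundy_ojmk_ne H' i k'
            rw [← hIH, ojoin_eq_ojmk G accG, ← hv, ojoin_eq_ojmk H' accH']
        · have e : H i = G i := (heq i hi).symm
          let j' : (G i).LeftMoves := e ▸ j
          have hIH := ihG (ojNextL G i j') (Relation.TransGen.single (ojrel_L G i j'))
              (ojNextL H i j) ((accH.inv (ojrel_L H i j)).transGen)
              (fun k hk => by
                by_cases hki : k = i
                · subst hki
                  rw [ojNextL_self, ojNextL_self]
                  exact moveLeft_cast e j
                · by_cases hik : i < k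
                  · rw [ojNextL_lt G i j' hik, ojNextL_lt H i j hik]
                  · rw [ojNextL_ne G i j' hki hik, ojNextL_ne H i j hki hik]
                    exact heq k hk)
              (by
                have h10 : i₀ ≠ i := fun h => hi h.symm
                by_cases hik : i < i₀
                · rw [ojNextL_lt G i j' hik, ojNextL_lt H i j hik]
                · rw [ojNextL_ne G i j' h10 hik, ojNextL_ne H i j h10 hik]
                  exact h0)
          exact grundy_ojmk_ne G i j' (by rw [hIH, hv])

end

/-- special substitution: for terminating ordered joins `S ⋈ G` and `S ⋈ H`
in the same shape `S`, a maximal `i₀ ∈ S` with `G i = H i` for all `i ≠ i₀` and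
`Γ₀(G i₀) = Γ₀(H i₀)`, we have `Γ₀(S ⋈ G) = Γ₀(S ⋈ H)`. -/
theorem ojoin_special_substitution {S : Type} [PartialOrder S] (G H : S → PGame)
    (hGI : ∀ i, (G i).Impartial) (hHI : ∀ i, (H i).Impartial)
    (hG : Acc OJRel G) (hH : Acc OJRel H)
    (i₀ : S) (hmax : ∀ i : S, ¬ i₀ < i)
    (heq : ∀ i, i ≠ i₀ → G i = H i)
    (h0 : grundyValue (G i₀) = grundyValue (H i₀)) :
    grundyValue (ojoin G) = grundyValue (ojoin H) :=
  ojoin_key i₀ hmax G hG.transGen H hH.transGen heq h0
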